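/- Let N be an acyclic simple graph such that every finite acyclic graph F admits a closed embedding into N, i.e. an injective map into the vertices of N preserving adjacency and non-adjacency whose image has no vertex of N outside it adjacent to it. Then N is *-homogeneous: for every finite set A of vertices of N such that no vertex of N outside A is adjacent to A, and every finite acyclic graph B containing A as an induced subgraph with no edge of B between A and B \ A, there is an embedding of B into N which is the identity on A and whose image has no vertex of N outside it adjacent to it. -/

import Mathlib

open SimpleGraph

/-- Mapping a cycle through a graph hom injective on the cycle's support gives a cycle. -/
lemma walk_map_isCycle_of_injOn {α β : Type*} {G : SimpleGraph α} {H : SimpleGraph β}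
    (f : G →g H) {v : α} {c : G.Walk v v} (hc : c.IsCycle)
    (hf : Set.InjOn f {x | x ∈ c.support}) : (c.map f).IsCycle := by
  refine ⟨⟨⟨?_⟩, ?_⟩, ?_⟩
  · rw [SimpleGraph.Walk.edges_map]
    refine List.Nodup.map_on ?_ hc.edges_nodup
    intro e he e' he' heq
    induction e with
    | _ a b =>
      induction e' with
      | _ a' b' =>
        have ha := c.fst_mem_support_of_mem_edges he
        have hb := c.snd_mem_support_of_mem_edges he
        have ha' := c.fst_mem_support_of_mem_edges he'
        have hb' := c.snd_mem_support_of_mem_edges he'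
        rw [Sym2.map_pair_eq, Sym2.map_pair_eq, Sym2.eq_iff] at heq
        rw [Sym2.eq_iff]
        rcases heq with ⟨h1, h2⟩ | ⟨h1, h2⟩
        · exact Or.inl ⟨hf ha ha' h1, hf hb hb' h2⟩
        · exact Or.inr ⟨hf ha hb' h1, hf hb ha' h2⟩
  · rw [Ne, SimpleGraph.Walk.map_eq_nil_iff]
    exact hc.ne_nil
  · rw [SimpleGraph.Walk.support_map, ← List.map_tail]
    refine List.Nodup.map_on ?_ hc.support_nodup
    intro x hx y hy hxy
    exact hf (List.mem_of_mem_tail hx) (List.mem_of_mem_tail hy) hxy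

/-- Disjoint copies of an acyclic graph form an acyclic graph. -/
lemma copies_isAcyclic {ι α : Type*} {B : SimpleGraph α} (hB : B.IsAcyclic) :
    (SimpleGraph.mk (fun x y : ι × α => x.1 = y.1 ∧ B.Adj x.2 y.2)
      ⟨fun _ _ h => ⟨h.1.symm, h.2.symm⟩⟩
      ⟨fun _ h => B.loopless.irrefl _ h.2⟩).IsAcyclic := by
  set F : SimpleGraph (ι × α) := SimpleGraph.mk (fun x y : ι × α => x.1 = y.1 ∧ B.Adj x.2 y.2)
      ⟨fun _ _ h => ⟨h.1.symm, h.2.symm⟩⟩ ⟨fun _ h => B.loopless.irrefl _ h.2⟩ with hF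
  intro v c hc
  have hfst : ∀ {u w : ι × α} (p : F.Walk u w), ∀ x ∈ p.support, x.1 = u.1 := by
    intro u w p
    induction p with
    | nil => intro x hx; simp at hx; subst hx; rfl
    | cons h p ih =>
      intro x hx
      rw [SimpleGraph.Walk.support_cons, List.mem_cons] at hx
      rcases hx with rfl | hx
      · rfl
      · exact (ih x hx).trans h.1.symm
  let φ : F →g B := ⟨Prod.snd, fun h => h.2⟩
  have hinj : Set.InjOn (φ : ι × α → α) {x | x ∈ c.support} := by
    intro x hx y hy hxy
    have := (hfst c x hx).trans (hfst c y hy).symm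
    exact Prod.ext this (show x.2 = y.2 from hxy)
  exact hB (c.map φ) (walk_map_isCycle_of_injOn φ hc hinj)

/-- Acyclicity pulls back along comap by an injective function. -/
lemma isAcyclic_comap' {α β : Type*} {G : SimpleGraph β} (hG : G.IsAcyclic)
    (f : α → β) (hf : Function.Injective f) : (SimpleGraph.comap f G).IsAcyclic := by
  intro v c hc
  let hom : SimpleGraph.comap f G →g G := ⟨f, id⟩
  exact hG (c.map hom) (hc.map (show Function.Injective (hom : α → β) from hf))

/-- Let `N` be an acyclic simple graph into which every finite acyclic graph admits a
closed embedding (an embedding whose image has no outside vertex of `N` adjacent to it).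
Then `N` is *-homogeneous: for every finite closed set `A` of vertices of `N` and every
finite acyclic graph `B` containing `A` as an induced subgraph with no edge between `A`
and `B \ A`, there is a closed embedding of `B` into `N` which is the identity on `A`. -/
theorem stmt_12 {V : Type*} (N : SimpleGraph V) (hN : N.IsAcyclic)
    (huniv : ∀ (n : ℕ) (F : SimpleGraph (Fin n)), F.IsAcyclic →
      ∃ f : Fin n → V, Function.Injective f ∧
        (∀ a b : Fin n, F.Adj a b ↔ N.Adj (f a) (f b)) ∧
        (∀ v : V, v ∉ Set.range f → ∀ a : Fin n, ¬ N.Adj v (f a))) :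
    ∀ (A : Finset V),
      -- A is closed in N
      (∀ v : V, v ∉ A → ∀ a ∈ A, ¬ N.Adj v a) →
      ∀ (n : ℕ) (B : SimpleGraph (Fin n)), B.IsAcyclic →
        ∀ g : {a : V // a ∈ A} → Fin n, Function.Injective g →
          -- B contains A as an induced subgraph (via g) ...
          (∀ a b : {a : V // a ∈ A}, N.Adj a.1 b.1 ↔ B.Adj (g a) (g b)) →
          -- ... with no edge of B between A and B \ A
          (∀ (a : {a : V // a ∈ A}) (w : Fin n), w ∉ Set.range g → ¬ B.Adj (g a) w) →
          -- then B closedly embeds into N over A: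
          ∃ f : Fin n → V, Function.Injective f ∧
            (∀ w w' : Fin n, B.Adj w w' ↔ N.Adj (f w) (f w')) ∧
            (∀ a : {a : V // a ∈ A}, f (g a) = a.1) ∧
            (∀ v : V, v ∉ Set.range f → ∀ w : Fin n, ¬ N.Adj v (f w)) := by
  intro A hA n B hB g hg hgiso hgcl
  classical
  set k := A.card with hk
  set Fc : SimpleGraph (Fin (k+1) × Fin n) :=
    SimpleGraph.mk (fun x y : Fin (k+1) × Fin n => x.1 = y.1 ∧ B.Adj x.2 y.2)
      ⟨fun _ _ h => ⟨h.1.symm, h.2.symm⟩⟩ ⟨fun _ h => B.loopless.irrefl _ h.2⟩ with hFc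
  set e : Fin (k+1) × Fin n ≃ Fin ((k+1)*n) := finProdFinEquiv with he
  obtain ⟨h, hinj, hiso, hcl⟩ := huniv ((k+1)*n) (SimpleGraph.comap e.symm Fc)
    (isAcyclic_comap' (copies_isAcyclic hB) _ e.symm.injective)
  have hFadj : ∀ (p q : Fin (k+1) × Fin n),
      (SimpleGraph.comap (e.symm : Fin ((k+1)*n) → _) Fc).Adj (e p) (e q) ↔
        (p.1 = q.1 ∧ B.Adj p.2 q.2) := by
    intro p q
    simp [SimpleGraph.comap, hFc]
  -- pigeonhole: some copy avoids A
  have hpig : ∃ i : Fin (k+1), ∀ w : Fin n, h (e (i, w)) ∉ A := by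
    by_contra hcon
    push_neg at hcon
    choose wit hwit using hcon
    have hψ : Function.Injective (fun i : Fin (k+1) => (⟨h (e (i, wit i)), hwit i⟩ : {a : V // a ∈ A})) := by
      intro i j hij
      have h1 : h (e (i, wit i)) = h (e (j, wit j)) := congrArg Subtype.val hij
      have h2 := e.injective (hinj h1)
      exact (Prod.mk.injEq _ _ _ _ ▸ h2).1
    have := Fintype.card_le_of_injective _ hψ
    simp [Fintype.card_coe, hk] at this
  obtain ⟨i, hi⟩ := hpig
  -- the embedding
  set f : Fin n → V := fun w =>
    if hw : ∃ a : {a : V // a ∈ A}, g a = w then hw.choose.1 else h (e (i, w)) with hf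
  have hfg : ∀ a : {a : V // a ∈ A}, f (g a) = a.1 := by
    intro a
    have hw : ∃ b : {a : V // a ∈ A}, g b = g a := ⟨a, rfl⟩
    rw [hf]
    simp only [dif_pos hw]
    exact congrArg Subtype.val (hg hw.choose_spec)
  have hfout : ∀ w : Fin n, (¬ ∃ a : {a : V // a ∈ A}, g a = w) → f w = h (e (i, w)) := by
    intro w hw; rw [hf]; simp only [dif_neg hw]
  have hfoutA : ∀ w : Fin n, (¬ ∃ a : {a : V // a ∈ A}, g a = w) → f w ∉ A := by
    intro w hw; rw [hfout w hw]; exact hi w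
  -- adjacency
  have hadj : ∀ w w' : Fin n, B.Adj w w' ↔ N.Adj (f w) (f w') := by
    intro w w'
    by_cases hw : ∃ a : {a : V // a ∈ A}, g a = w
    · obtain ⟨a, rfl⟩ := hw
      by_cases hw' : ∃ b : {a : V // a ∈ A}, g b = w'
      · obtain ⟨b, rfl⟩ := hw'
        rw [hfg a, hfg b]
        exact (hgiso a b).symm
      · refine iff_of_false (hgcl a w' (by rwa [Set.mem_range])) ?_
        intro hadj
        exact hA (f w') (hfoutA w' hw') a.1 a.2 ((hfg a ▸ hadj).symm)
    · by_cases hw' : ∃ b : {a : V // a ∈ A}, g b = w'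
      · obtain ⟨b, rfl⟩ := hw'
        refine iff_of_false (fun hadj => hgcl b w (by rwa [Set.mem_range]) hadj.symm) ?_
        intro hadj
        exact hA (f w) (hfoutA w hw) b.1 b.2 (hfg b ▸ hadj)
      · rw [hfout w hw, hfout w' hw']
        rw [← hiso (e (i, w)) (e (i, w')), hFadj (i, w) (i, w')]
        simp
  -- injectivity
  have hfinj : Function.Injective f := by
    intro w w' heq
    by_cases hw : ∃ a : {a : V // a ∈ A}, g a = w
    · obtain ⟨a, rfl⟩ := hw
      by_cases hw' : ∃ b : {a : V // a ∈ A}, g b = w'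
      · obtain ⟨b, rfl⟩ := hw'
        rw [hfg a, hfg b] at heq
        exact congrArg g (Subtype.ext heq)
      · exact absurd (heq ▸ (hfg a ▸ a.2 : f (g a) ∈ A)) (hfoutA w' hw')
    · by_cases hw' : ∃ b : {a : V // a ∈ A}, g b = w'
      · obtain ⟨b, rfl⟩ := hw'
        exact absurd (heq ▸ (hfg b ▸ b.2 : f (g b) ∈ A)) (heq ▸ hfoutA w hw)
      · rw [hfout w hw, hfout w' hw'] at heq
        have := e.injective (hinj heq)
        exact (Prod.mk.injEq _ _ _ _ ▸ this).2
  refine ⟨f, hfinj, hadj, hfg, ?_⟩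
  -- closedness
  intro v hv w
  have hvA : v ∉ A := by
    intro hvA
    exact hv ⟨g ⟨v, hvA⟩, hfg ⟨v, hvA⟩⟩
  by_cases hw : ∃ a : {a : V // a ∈ A}, g a = w
  · obtain ⟨a, rfl⟩ := hw
    rw [hfg a]
    exact hA v hvA a.1 a.2
  · rw [hfout w hw]
    by_cases hvr : v ∈ Set.range h
    · obtain ⟨x, rfl⟩ := hvr
      intro hadj
      have hFx : (SimpleGraph.comap (e.symm : Fin ((k+1)*n) → _) Fc).Adj x (e (i, w)) :=
        (hiso x (e (i, w))).mpr hadj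
      have hx' : x = e (e.symm x) := (e.apply_symm_apply x).symm
      rw [hx'] at hFx
      rw [hFadj (e.symm x) (i, w)] at hFx
      obtain ⟨hfst, hsnd⟩ := hFx
      set u := (e.symm x).2 with hu
      have hxu : x = e (i, u) := by
        rw [hx']
        congr 1
        exact Prod.ext hfst rfl
      by_cases hur : ∃ a : {a : V // a ∈ A}, g a = u
      · obtain ⟨a, ha⟩ := hur
        rw [← ha] at hsnd
        exact hgcl a w (by rwa [Set.mem_range]) hsnd
      · exact hv ⟨u, by rw [hfout u hur, ← hxu, hx']⟩
    · exact hcl v hvr (e (i, w))
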